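/- The series ∑_{n=0}^∞ (n!)² / (2n)! · 4ⁿ / (2n+1)² equals 2G, where G is Catalan's constant. -/

import Mathlib

open MeasureTheory Real Set intervalIntegral ENNReal


lemma asc_prod (m k : ℕ) : (m + 1).ascFactorial k = ∏ j ∈ Finset.range k, (m + 1 + j) := by
  induction k with
  | zero => simp
  | succ k ih => rw [Nat.ascFactorial_succ, Finset.prod_range_succ, ih]; ring

lemma beta_nat (n : ℕ) :
    ∫ x in (0:ℝ)..1, (x * (1 - x)) ^ n = (n.factorial : ℝ) ^ 2 / (2 * n + 1).factorial := by
  have h := Complex.betaIntegral_eval_nat_add_one_right (u := (n + 1 : ℂ)) (by simp; positivity) n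
  rw [Complex.betaIntegral] at h
  have hprod : (∏ j ∈ Finset.range (n + 1), ((n : ℂ) + 1 + j)) =
      ((2 * n + 1).factorial / n.factorial : ℂ) := by
    have h1 : (∏ j ∈ Finset.range (n + 1), ((n : ℂ) + 1 + j)) =
        ((n + 1).ascFactorial (n + 1) : ℕ) := by
      rw [asc_prod]; push_cast; rfl
    have h2 : n.factorial * (n + 1).ascFactorial (n + 1) = (2 * n + 1).factorial := by
      rw [Nat.factorial_mul_ascFactorial]; congr 1; ring
    rw [h1, _root_.eq_div_iff (by exact_mod_cast n.factorial_ne_zero), mul_comm]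
    exact_mod_cast congrArg (Nat.cast : ℕ → ℂ) h2
  rw [hprod] at h
  have hint : (∫ x : ℝ in (0)..1, (x:ℂ) ^ ((n:ℂ) + 1 - 1) * (1 - (x:ℂ)) ^ ((n:ℂ) + 1 - 1)) =
      ((∫ x in (0:ℝ)..1, (x * (1 - x)) ^ n : ℝ) : ℂ) := by
    rw [← intervalIntegral.integral_ofReal]
    apply intervalIntegral.integral_congr
    intro x _
    have : ((n:ℂ) + 1 - 1) = ((n : ℕ) : ℂ) := by ring
    simp only [this, Complex.cpow_natCast]
    push_cast
    rw [← mul_pow]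
  rw [hint] at h
  have := congrArg Complex.re h
  rw [Complex.ofReal_re] at this
  rw [this]
  have : ((n.factorial : ℂ) / ((2 * n + 1).factorial / n.factorial)) =
      (((n.factorial : ℝ) ^ 2 / (2 * n + 1).factorial : ℝ) : ℂ) := by
    push_cast
    field_simp
  rw [this, Complex.ofReal_re]


noncomputable def cc (n : ℕ) : ℝ := 4 ^ n * (n.factorial : ℝ) ^ 2 / (2 * n).factorial

lemma cc_nonneg (n : ℕ) : 0 ≤ cc n := by unfold cc; positivity

lemma cc_rec (n : ℕ) : cc (n + 1) = cc n * (2 * (n + 1)) / (2 * n + 1) := by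
  unfold cc
  have e1 : 2 * (n + 1) = (2 * n + 1) + 1 := by ring
  rw [e1, Nat.factorial_succ, Nat.factorial_succ, Nat.factorial_succ]
  have h1 : ((2 * n).factorial : ℝ) ≠ 0 := by exact_mod_cast (2 * n).factorial_ne_zero
  have h2 : ((2 * n : ℕ) : ℝ) + 1 ≠ 0 := by positivity
  push_cast
  field_simp
  ring

lemma cc_sq_le (n : ℕ) : cc (n + 1) ^ 2 ≤ 4 * (n + 1) := by
  induction n with
  | zero =>
    have : cc 1 = 2 := by
      rw [show cc 1 = cc (0 + 1) from rfl, cc_rec]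
      unfold cc
      norm_num
    rw [this]; norm_num
  | succ n ih =>
    rw [cc_rec (n + 1)]
    have h3 : (0:ℝ) < 2 * (n + 1 : ℝ) + 1 := by positivity
    rw [div_pow, mul_pow, div_le_iff₀ (by positivity)]
    have hc := cc_nonneg (n + 1)
    push_cast
    nlinarith [sq_nonneg (cc (n+1))]

lemma summable_t : Summable (fun n : ℕ =>
    (n.factorial : ℝ) ^ 2 / (2 * n).factorial * 4 ^ n / (2 * n + 1) ^ 2) := by
  rw [← summable_nat_add_iff 1]
  have hsum : Summable (fun n : ℕ => 1 / ((n : ℝ) + 1) ^ ((3 : ℝ) / 2)) := by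
    have := summable_one_div_nat_rpow (p := (3:ℝ)/2) |>.2 (by norm_num)
    exact_mod_cast (summable_nat_add_iff 1).2 this
  apply Summable.of_nonneg_of_le _ _ hsum
  · intro n; positivity
  · intro n
    have hc : cc (n + 1) ≤ 2 * Real.sqrt (n + 1) := by
      have h := cc_sq_le n
      have : (2 * Real.sqrt (n + 1)) ^ 2 = 4 * (n + 1) := by
        rw [mul_pow, sq_sqrt (by positivity)]; ring
      nlinarith [cc_nonneg (n + 1), Real.sqrt_nonneg ((n:ℝ) + 1)]
    have heq : ((n+1).factorial : ℝ) ^ 2 / (2 * (n+1)).factorial * 4 ^ (n+1) / (2 * (n+1) + 1) ^ 2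
        = cc (n+1) / (2 * ((n:ℝ)+1) + 1) ^ 2 := by
      unfold cc; push_cast; ring
    push_cast
    rw [heq]
    have hrpow : ((n : ℝ) + 1) ^ ((3:ℝ)/2) = ((n:ℝ) + 1) * Real.sqrt ((n:ℝ) + 1) := by
      have hpos : (0:ℝ) < (n:ℝ) + 1 := by positivity
      rw [show (3:ℝ)/2 = 1 + 1/2 by norm_num, Real.rpow_add hpos, Real.rpow_one,
        ← Real.sqrt_eq_rpow]
    rw [hrpow]
    rw [div_le_div_iff₀ (by positivity) (by positivity)]
    have hs : Real.sqrt ((n:ℝ)+1) ≥ 0 := Real.sqrt_nonneg _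
    have hss : Real.sqrt ((n:ℝ)+1) * Real.sqrt ((n:ℝ)+1) = (n:ℝ)+1 :=
      Real.mul_self_sqrt (by positivity)
    calc cc (n+1) * (((n:ℝ) + 1) * Real.sqrt ((n:ℝ)+1))
        ≤ 2 * Real.sqrt ((n:ℝ)+1) * (((n:ℝ) + 1) * Real.sqrt ((n:ℝ)+1)) := by
          apply mul_le_mul_of_nonneg_right _ (by positivity)
          exact_mod_cast hc
      _ = 2 * ((n:ℝ)+1) ^ 2 := by rw [mul_assoc, mul_comm (Real.sqrt _), mul_assoc, hss]; ring
      _ ≤ 1 * (2 * ((n:ℝ)+1) + 1) ^ 2 := by nlinarith [Nat.cast_nonneg (α := ℝ) n]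


-- d n ≤ 1
noncomputable def dd (n : ℕ) : ℝ := 4 ^ n * (n.factorial : ℝ) ^ 2 / (2 * n + 1).factorial

lemma dd_nonneg (n : ℕ) : 0 ≤ dd n := by unfold dd; positivity

lemma dd_le_one (n : ℕ) : dd n ≤ 1 := by
  induction n with
  | zero => unfold dd; norm_num
  | succ n ih =>
    have hrec : dd (n + 1) = dd n * (2 * (n + 1)) / (2 * n + 3) := by
      unfold dd
      have e1 : 2 * (n + 1) + 1 = ((2 * n + 1) + 1) + 1 := by ring
      rw [e1, Nat.factorial_succ, Nat.factorial_succ, Nat.factorial_succ]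
      have h1 : ((2 * n + 1).factorial : ℝ) ≠ 0 := by exact_mod_cast (2 * n + 1).factorial_ne_zero
      push_cast
      field_simp
      ring
    rw [hrec]
    rw [div_le_one (by positivity)]
    have h2 : dd n * (2 * ((n:ℝ) + 1)) ≤ 1 * (2 * ((n:ℝ) + 1)) := by
      apply mul_le_mul_of_nonneg_right ih (by positivity)
    nlinarith


lemma cont_int {f : ℝ → ℝ} (hf : Continuous f) : IntegrableOn f (Ioo (0:ℝ) 1) volume :=
  (hf.integrableOn_Icc).mono_set Ioo_subset_Icc_self

lemma pow_int (n : ℕ) : (∫ s in Ioo (0:ℝ) 1, (s^2)^n) = 1 / (2*(n:ℝ)+1) := by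
  rw [← MeasureTheory.integral_Ioc_eq_integral_Ioo, ← intervalIntegral.integral_of_le zero_le_one]
  have h : (∫ s in (0:ℝ)..1, (s^2)^n) = ∫ s in (0:ℝ)..1, s^(2*n) := by
    apply intervalIntegral.integral_congr; intro x _; simp [pow_mul]
  rw [h, integral_pow]
  push_cast
  simp

lemma rhs_eq : ∑' n : ℕ, ((-1:ℝ)^n/(2*(n:ℝ)+1)^2) = ∫ s in Ioo (0:ℝ) 1, Real.arctan s / s := by
  have hmeas : ∀ n : ℕ, AEStronglyMeasurable (fun s : ℝ => (-1:ℝ)^n * (s^2)^n / (2*(n:ℝ)+1))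
      (volume.restrict (Ioo (0:ℝ) 1)) := by
    intro n; apply Continuous.aestronglyMeasurable; fun_prop
  have hnorm : ∀ (n : ℕ) (s : ℝ), ‖(-1:ℝ)^n * (s^2)^n / (2*(n:ℝ)+1)‖ = (s^2)^n / (2*(n:ℝ)+1) := by
    intro n s
    rw [Real.norm_eq_abs, abs_div, abs_mul, abs_pow, abs_neg, abs_one, one_pow, one_mul,
      abs_of_nonneg (by positivity : (0:ℝ) ≤ (s^2)^n), abs_of_pos (by positivity)]
  have habs : ∀ n : ℕ, (∫ s in Ioo (0:ℝ) 1, (s^2)^n / (2*(n:ℝ)+1)) = 1/(2*(n:ℝ)+1)^2 := by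
    intro n
    rw [MeasureTheory.integral_div, pow_int]
    field_simp
  have hint : ∀ n : ℕ, (∫ s in Ioo (0:ℝ) 1, (-1:ℝ)^n * (s^2)^n / (2*(n:ℝ)+1))
      = (-1:ℝ)^n/(2*(n:ℝ)+1)^2 := by
    intro n
    have h : (fun s : ℝ => (-1:ℝ)^n * (s^2)^n / (2*(n:ℝ)+1))
        = fun s : ℝ => ((-1:ℝ)^n / (2*(n:ℝ)+1)) * (s^2)^n := by funext s; ring
    rw [h, MeasureTheory.integral_const_mul, pow_int]
    field_simp
  have hsum2 : Summable (fun n : ℕ => 1/(2*(n:ℝ)+1)^2) := by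
    apply Summable.of_nonneg_of_le (fun n => by positivity)
      (fun n => ?_) ((summable_nat_add_iff 1).2 (Real.summable_one_div_nat_pow.2 one_lt_two))
    push_cast
    rw [div_le_div_iff₀ (by positivity) (by positivity)]
    nlinarith [Nat.cast_nonneg (α := ℝ) n]
  have hf' : ∑' n : ℕ, ∫⁻ s in Ioo (0:ℝ) 1, ‖(-1:ℝ)^n * (s^2)^n / (2*(n:ℝ)+1)‖₊ ≠ ∞ := by
    have heach : ∀ n : ℕ, (∫⁻ s in Ioo (0:ℝ) 1, ‖(-1:ℝ)^n * (s^2)^n / (2*(n:ℝ)+1)‖₊)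
        = ENNReal.ofReal (1/(2*(n:ℝ)+1)^2) := by
      intro n
      have hfun : (fun s : ℝ => (‖(-1:ℝ)^n * (s^2)^n / (2*(n:ℝ)+1)‖₊ : ℝ≥0∞))
          = fun s : ℝ => ENNReal.ofReal ((s^2)^n / (2*(n:ℝ)+1)) := by
        funext s
        rw [← enorm_eq_nnnorm, ← ofReal_norm, hnorm]
      rw [hfun, ← ofReal_integral_eq_lintegral_ofReal (cont_int (by fun_prop))
        (Filter.Eventually.of_forall (fun s => by positivity)), habs]
    simp_rw [heach]
    rw [← ENNReal.ofReal_tsum_of_nonneg (fun n => by positivity) hsum2]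
    exact ofReal_ne_top
  have hswap := MeasureTheory.integral_tsum hmeas hf'
  have hpt : ∀ s ∈ Ioo (0:ℝ) 1,
      (∑' n : ℕ, (-1:ℝ)^n * (s^2)^n / (2*(n:ℝ)+1)) = Real.arctan s / s := by
    intro s hs
    obtain ⟨hs0, hs1⟩ := hs
    have h := Real.hasSum_arctan (x := s) (by rw [Real.norm_eq_abs, abs_of_pos hs0]; exact hs1)
    have h2 := (h.div_const s).tsum_eq
    rw [← h2]
    congr 1
    funext n
    have : s ^ (2*n+1) = (s^2)^n * s := by rw [pow_succ, pow_mul]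
    rw [this]
    push_cast
    field_simp
  calc ∑' n : ℕ, ((-1:ℝ)^n/(2*(n:ℝ)+1)^2)
      = ∑' n : ℕ, ∫ s in Ioo (0:ℝ) 1, (-1:ℝ)^n * (s^2)^n / (2*(n:ℝ)+1) := by
        congr 1; funext n; exact (hint n).symm
    _ = ∫ s in Ioo (0:ℝ) 1, ∑' n : ℕ, (-1:ℝ)^n * (s^2)^n / (2*(n:ℝ)+1) := hswap.symm
    _ = ∫ s in Ioo (0:ℝ) 1, Real.arctan s / s := setIntegral_congr_fun measurableSet_Ioo hpt


-- helper: set integral over Ioo of (x(1-x))^n scaled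
lemma beta_Ioo (n : ℕ) (c : ℝ) :
    ∫ x in Ioo (0:ℝ) 1, (c * (x * (1-x))) ^ n =
      c ^ n * ((n.factorial : ℝ) ^ 2 / (2 * n + 1).factorial) := by
  rw [← MeasureTheory.integral_Ioc_eq_integral_Ioo, ← intervalIntegral.integral_of_le zero_le_one]
  have hcg : (∫ x in (0:ℝ)..1, (c*(x*(1-x)))^n) = ∫ x in (0:ℝ)..1, c^n * (x*(1-x))^n := by
    apply intervalIntegral.integral_congr; intro x _; simp [mul_pow]
  rw [hcg, intervalIntegral.integral_const_mul, beta_nat]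

lemma inner_swap {y : ℝ} (hy : y ∈ Ioo (0:ℝ) 1) :
    ∫ x in Ioo (0:ℝ) 1, (1 - 4*x*(1-x)*y^2)⁻¹ =
      ∑' n : ℕ, (4*y^2) ^ n * ((n.factorial : ℝ) ^ 2 / (2 * n + 1).factorial) := by
  obtain ⟨hy0, hy1⟩ := hy
  have hy2 : y^2 < 1 := by nlinarith
  have hmeas : ∀ n : ℕ, AEStronglyMeasurable (fun x : ℝ => (4*y^2*(x*(1-x))) ^ n)
      (volume.restrict (Ioo (0:ℝ) 1)) := by
    intro n; apply Continuous.aestronglyMeasurable; fun_prop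
  have hbound : ∀ n : ℕ, ∀ x ∈ Ioo (0:ℝ) 1, ‖(4*y^2*(x*(1-x))) ^ n‖ ≤ y^(2*n) := by
    intro n x hx
    obtain ⟨h0, h1⟩ := hx
    have hxx : (0:ℝ) ≤ x*(1-x) := mul_nonneg h0.le (by linarith)
    have h4 : 0 ≤ 4*y^2*(x*(1-x)) := mul_nonneg (by positivity) hxx
    have h5 : 4*y^2*(x*(1-x)) ≤ y^2 := by nlinarith [sq_nonneg (1-2*x), sq_nonneg y]
    rw [Real.norm_eq_abs, abs_pow, abs_of_nonneg h4, pow_mul]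
    exact pow_le_pow_left₀ h4 h5 n
  have hf' : ∑' n : ℕ, ∫⁻ x in Ioo (0:ℝ) 1, ‖(4*y^2*(x*(1-x))) ^ n‖₊ ≠ ∞ := by
    have hb : ∀ n : ℕ, (∫⁻ x in Ioo (0:ℝ) 1, ‖(4*y^2*(x*(1-x))) ^ n‖₊)
        ≤ ENNReal.ofReal (y^(2*n)) := by
      intro n
      calc ∫⁻ x in Ioo (0:ℝ) 1, ‖(4*y^2*(x*(1-x))) ^ n‖₊
          ≤ ∫⁻ _ in Ioo (0:ℝ) 1, ENNReal.ofReal (y^(2*n)) := by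
            apply setLIntegral_mono measurable_const
            intro x hx
            rw [← enorm_eq_nnnorm, ← ofReal_norm]
            exact ENNReal.ofReal_le_ofReal (hbound n x hx)
        _ = ENNReal.ofReal (y^(2*n)) * volume (Ioo (0:ℝ) 1) := setLIntegral_const _ _
        _ ≤ ENNReal.ofReal (y^(2*n)) := by
            rw [Real.volume_Ioo]
            simp [ENNReal.ofReal_one]
    apply ne_top_of_le_ne_top _ (ENNReal.tsum_le_tsum hb)
    have hs : Summable (fun n : ℕ => y^(2*n)) := by
      simp_rw [pow_mul]
      exact summable_geometric_of_lt_one (by positivity) hy2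
    rw [← ENNReal.ofReal_tsum_of_nonneg (fun n => by positivity) hs]
    exact ofReal_ne_top
  have hswap := MeasureTheory.integral_tsum hmeas hf'
  have hpt : ∀ x ∈ Ioo (0:ℝ) 1,
      (1 - 4*x*(1-x)*y^2)⁻¹ = ∑' n : ℕ, (4*y^2*(x*(1-x))) ^ n := by
    intro x hx
    obtain ⟨h0, h1⟩ := hx
    have hxx : (0:ℝ) ≤ x*(1-x) := mul_nonneg h0.le (by linarith)
    have h4 : 0 ≤ 4*y^2*(x*(1-x)) := mul_nonneg (by positivity) hxx
    have h5 : 4*y^2*(x*(1-x)) < 1 := by nlinarith [sq_nonneg (1-2*x), sq_nonneg y]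
    rw [tsum_geometric_of_lt_one h4 h5]
    congr 1
    ring
  calc ∫ x in Ioo (0:ℝ) 1, (1 - 4*x*(1-x)*y^2)⁻¹
      = ∫ x in Ioo (0:ℝ) 1, ∑' n : ℕ, (4*y^2*(x*(1-x))) ^ n :=
        setIntegral_congr_fun measurableSet_Ioo hpt
    _ = ∑' n : ℕ, ∫ x in Ioo (0:ℝ) 1, (4*y^2*(x*(1-x))) ^ n := hswap
    _ = ∑' n : ℕ, (4*y^2) ^ n * ((n.factorial : ℝ) ^ 2 / (2 * n + 1).factorial) := by
        congr 1; funext n; exact beta_Ioo n (4*y^2)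


lemma xint {y : ℝ} (hy : y ∈ Ioo (0:ℝ) 1) :
    ∫ x in (0:ℝ)..1, (1 - 4*x*(1-x)*y^2)⁻¹ =
      Real.arctan (y / Real.sqrt (1 - y^2)) / (y * Real.sqrt (1 - y^2)) := by
  obtain ⟨hy0, hy1⟩ := hy
  set b := Real.sqrt (1 - y^2) with hb
  have hb2 : b ^ 2 = 1 - y ^ 2 := Real.sq_sqrt (by nlinarith)
  have hbpos : 0 < b := Real.sqrt_pos.2 (by nlinarith)
  -- positivity of denominator on [0,1]
  have hden : ∀ x ∈ Icc (0:ℝ) 1, 0 < 1 - 4*x*(1-x)*y^2 := by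
    intro x hx
    obtain ⟨h0, h1⟩ := hx
    nlinarith [sq_nonneg (1 - 2*x), sq_nonneg y, mul_nonneg h0 (sub_nonneg.2 h1)]
  have hderiv : ∀ x ∈ uIcc (0:ℝ) 1,
      HasDerivAt (fun x => (1/(2*y*b)) * Real.arctan (2*y/b*(x - 1/2)))
        ((1 - 4*x*(1-x)*y^2)⁻¹) x := by
    intro x _
    have hu : HasDerivAt (fun x : ℝ => 2*y/b*(x - 1/2)) (2*y/b) x := by
      exact (((hasDerivAt_id x).sub_const (1/2)).const_mul (2*y/b)).congr_deriv (by ring)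
    have ha := (Real.hasDerivAt_arctan (2*y/b*(x - 1/2))).comp x hu
    have := ha.const_mul (1/(2*y*b))
    refine this.congr_deriv ?_
    have h1 : 1 + (2*y/b*(x - 1/2))^2 = (1 - 4*x*(1-x)*y^2) / b^2 := by
      field_simp
      nlinarith [hb2]
    rw [h1]
    have h2 : (1 - 4*x*(1-x)*y^2) ≠ 0 := by
      rcases le_or_gt x 0 with h | h
      · nlinarith [sq_nonneg (1-2*x), sq_nonneg y, mul_nonneg (neg_nonneg.2 h) (by nlinarith : (0:ℝ) ≤ 1 - x), sq_nonneg (y*(1-2*x))]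
      · rcases le_or_gt 1 x with h' | h'
        · nlinarith [sq_nonneg (y*(1-2*x))]
        · exact (hden x ⟨h.le, h'.le⟩).ne'
    field_simp
  have hcont : ContinuousOn (fun x : ℝ => (1 - 4*x*(1-x)*y^2)⁻¹) (uIcc 0 1) := by
    apply ContinuousOn.inv₀
    · fun_prop
    · intro x hx
      rw [uIcc_of_le (by norm_num : (0:ℝ) ≤ 1)] at hx
      exact (hden x hx).ne'
  rw [intervalIntegral.integral_eq_sub_of_hasDerivAt hderiv
    (hcont.intervalIntegrable)]
  have e0 : (2*y/b*((0:ℝ) - 1/2)) = -(y/b) := by ring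
  have e1 : (2*y/b*((1:ℝ) - 1/2)) = y/b := by ring
  rw [e0, e1, Real.arctan_neg]
  field_simp
  ring


noncomputable def G (y : ℝ) : ℝ := Real.arctan (y / Real.sqrt (1 - y^2)) / (y * Real.sqrt (1 - y^2))

lemma phi_img : (fun u : ℝ => 2*u/(1+u^2)) '' Ioo 0 1 = Ioo (0:ℝ) 1 := by
  ext y
  constructor
  · rintro ⟨u, ⟨hu0, hu1⟩, rfl⟩
    constructor
    · positivity
    · rw [div_lt_one (by positivity)]; nlinarith [sq_nonneg (1-u)]
  · rintro ⟨hy0, hy1⟩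
    refine ⟨(1 - Real.sqrt (1 - y^2))/y, ⟨?_, ?_⟩, ?_⟩
    · apply div_pos _ hy0
      have : Real.sqrt (1 - y^2) < 1 := by
        apply (Real.sqrt_lt' one_pos).2
        nlinarith
      linarith
    · rw [div_lt_one hy0]
      have h1 : 1 - y < Real.sqrt (1 - y^2) := by
        have : (1 - y) = Real.sqrt ((1-y)^2) := (Real.sqrt_sq (by linarith)).symm
        rw [this]
        apply Real.sqrt_lt_sqrt (sq_nonneg _) (by nlinarith)
      linarith
    · have hs : Real.sqrt (1 - y^2) ^ 2 = 1 - y^2 := Real.sq_sqrt (by nlinarith)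
      have hyne : y ≠ 0 := hy0.ne'
      field_simp
      nlinarith [hs]

lemma phi_deriv {u : ℝ} (hu : u ∈ Ioo (0:ℝ) 1) :
    HasDerivAt (fun u : ℝ => 2*u/(1+u^2)) (2*(1-u^2)/(1+u^2)^2) u := by
  have h1 : HasDerivAt (fun u : ℝ => 2*u) 2 u := by
    simpa using (hasDerivAt_id u).const_mul 2
  have h2 : HasDerivAt (fun u : ℝ => 1+u^2) (2*u) u := by
    simpa using ((hasDerivAt_pow 2 u).const_add 1)
  have := h1.div h2 (by positivity)
  refine this.congr_deriv ?_
  field_simp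
  ring

lemma phi_inj : InjOn (fun u : ℝ => 2*u/(1+u^2)) (Ioo 0 1) := by
  rintro u ⟨hu0, hu1⟩ v ⟨hv0, hv1⟩ h
  simp only at h
  have h1 : (0:ℝ) < 1 + u^2 := by positivity
  have h2 : (0:ℝ) < 1 + v^2 := by positivity
  rw [div_eq_div_iff h1.ne' h2.ne'] at h
  have : (u - v) * (1 - u*v) = 0 := by nlinarith
  rcases mul_eq_zero.1 this with h' | h'
  · linarith
  · nlinarith

lemma subst_eq : ∫ y in Ioo (0:ℝ) 1, G y = ∫ u in Ioo (0:ℝ) 1, 2 * Real.arctan u / u := by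
  have h := integral_image_eq_integral_abs_deriv_smul measurableSet_Ioo
    (f := fun u : ℝ => 2*u/(1+u^2)) (f' := fun u => 2*(1-u^2)/(1+u^2)^2)
    (fun u hu => (phi_deriv hu).hasDerivWithinAt) phi_inj G
  rw [phi_img] at h
  rw [h]
  apply setIntegral_congr_fun measurableSet_Ioo
  intro u hu
  obtain ⟨hu0, hu1⟩ := hu
  have hs : (0:ℝ) < 1 + u^2 := by positivity
  have h1u : (0:ℝ) < 1 - u^2 := by nlinarith
  have hy : 1 - (2*u/(1+u^2))^2 = ((1-u^2)/(1+u^2))^2 := by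
    field_simp
    ring
  have hsqrt : Real.sqrt (1 - (2*u/(1+u^2))^2) = (1-u^2)/(1+u^2) := by
    rw [hy, Real.sqrt_sq (by positivity)]
  simp only [G, smul_eq_mul]
  rw [hsqrt]
  have harg : 2*u/(1+u^2) / ((1-u^2)/(1+u^2)) = 2*u/(1-u^2) := by
    field_simp
  rw [harg, ← Real.two_mul_arctan (by linarith) hu1]
  rw [abs_of_pos (by positivity)]
  field_simp


lemma lhs_eq : ∑' n : ℕ, ((n.factorial : ℝ) ^ 2 / (2 * n).factorial * 4 ^ n / (2 * n + 1) ^ 2)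
    = ∫ y in Ioo (0:ℝ) 1, G y := by
  set F : ℕ → ℝ → ℝ := fun n y => (4*y^2) ^ n * ((n.factorial : ℝ) ^ 2 / (2 * n + 1).factorial)
    with hF
  have hFnn : ∀ (n : ℕ) (y : ℝ), 0 ≤ F n y := by
    intro n y; rw [hF]; positivity
  have hfac : ∀ n : ℕ, ((2 * n + 1).factorial : ℝ) = (2*(n:ℝ)+1) * (2*n).factorial := by
    intro n
    rw [Nat.factorial_succ]
    push_cast
    ring
  have hintF : ∀ n : ℕ, (∫ y in Ioo (0:ℝ) 1, F n y)
      = (n.factorial : ℝ) ^ 2 / (2 * n).factorial * 4 ^ n / (2 * n + 1) ^ 2 := by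
    intro n
    have h1 : (fun y : ℝ => F n y) = fun y : ℝ =>
        (4^n * ((n.factorial : ℝ) ^ 2 / (2 * n + 1).factorial)) * (y^2)^n := by
      funext y; rw [hF]; simp only [mul_pow]; ring
    rw [h1, MeasureTheory.integral_const_mul, pow_int, hfac]
    have h2 : ((2*n).factorial : ℝ) ≠ 0 := by exact_mod_cast (2*n).factorial_ne_zero
    have h3 : (2*(n:ℝ)+1) ≠ 0 := by positivity
    field_simp
  have hmeas : ∀ n : ℕ, AEStronglyMeasurable (F n) (volume.restrict (Ioo (0:ℝ) 1)) := by
    intro n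
    apply Continuous.aestronglyMeasurable
    rw [hF]
    fun_prop
  have hf' : ∑' n : ℕ, ∫⁻ y in Ioo (0:ℝ) 1, ‖F n y‖₊ ≠ ∞ := by
    have heach : ∀ n : ℕ, (∫⁻ y in Ioo (0:ℝ) 1, ‖F n y‖₊)
        = ENNReal.ofReal ((n.factorial : ℝ) ^ 2 / (2 * n).factorial * 4 ^ n / (2 * n + 1) ^ 2) := by
      intro n
      have hfun : (fun y : ℝ => (‖F n y‖₊ : ℝ≥0∞)) = fun y : ℝ => ENNReal.ofReal (F n y) := by
        funext y
        rw [← enorm_eq_nnnorm, ← ofReal_norm, Real.norm_eq_abs, abs_of_nonneg (hFnn n y)]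
      rw [hfun, ← ofReal_integral_eq_lintegral_ofReal (cont_int (by rw [hF]; fun_prop))
        (Filter.Eventually.of_forall (fun y => hFnn n y)), hintF]
    simp_rw [heach]
    rw [← ENNReal.ofReal_tsum_of_nonneg (fun n => by positivity) summable_t]
    exact ofReal_ne_top
  have hswap := MeasureTheory.integral_tsum hmeas hf'
  have hpt : ∀ y ∈ Ioo (0:ℝ) 1, (∑' n : ℕ, F n y) = G y := by
    intro y hy
    rw [hF, ← inner_swap hy]
    rw [← MeasureTheory.integral_Ioc_eq_integral_Ioo, ← intervalIntegral.integral_of_le zero_le_one,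
      xint hy]
    rfl
  calc ∑' n : ℕ, ((n.factorial : ℝ) ^ 2 / (2 * n).factorial * 4 ^ n / (2 * n + 1) ^ 2)
      = ∑' n : ℕ, ∫ y in Ioo (0:ℝ) 1, F n y := by congr 1; funext n; exact (hintF n).symm
    _ = ∫ y in Ioo (0:ℝ) 1, ∑' n : ℕ, F n y := hswap.symm
    _ = ∫ y in Ioo (0:ℝ) 1, G y := setIntegral_congr_fun measurableSet_Ioo hpt


theorem stmt7 :
    ∑' n : ℕ, ((n.factorial : ℝ) ^ 2 / (2 * n).factorial * 4 ^ n / (2 * n + 1) ^ 2) =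
      2 * ∑' n : ℕ, ((-1 : ℝ) ^ n / (2 * n + 1) ^ 2) := by
  rw [lhs_eq, subst_eq]
  have h : (∫ u in Ioo (0:ℝ) 1, 2 * Real.arctan u / u)
      = 2 * ∫ u in Ioo (0:ℝ) 1, Real.arctan u / u := by
    rw [← MeasureTheory.integral_const_mul]
    congr 1; funext u; ring
  rw [h, ← rhs_eq]
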